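/- Suppose G is connected and (E_k)_{k∈ℕ} is a sequence of Borel subsets of G with 0 < μ(E_k) < ∞ for all k. If there exists a neighborhood U of the identity e such that β_{E_k}(x) → 0 as k → ∞ for μ-almost every x ∈ U, then β_{E_k}(x) → 0 for every x ∈ G, i.e. (E_k) is pointwise Følner on all of G. -/

import Mathlib

open MeasureTheory Filter Topology
open scoped Pointwise ENNReal

/-- For a Borel set `E` with `0 < μ E < ∞`, the Følner defect function
`β_E(x) = μ(E \ Ex⁻¹) / μ(E)`. Here `Ex⁻¹ = {y | yx ∈ E} = (· * x) ⁻¹' E`. -/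
noncomputable def folnerDefect {G : Type*} [Group G] [MeasurableSpace G]
    (μ : Measure G) (E : Set G) (x : G) : ℝ :=
  (μ (E \ (· * x) ⁻¹' E)).toReal / (μ E).toReal

section Aux
variable {G : Type*} [Group G] [MeasurableSpace G] [MeasurableMul G]
  (μ : Measure G) [μ.IsMulRightInvariant]

lemma folnerDefect_nonneg (E : Set G) (x : G) : 0 ≤ folnerDefect μ E x :=
  div_nonneg ENNReal.toReal_nonneg ENNReal.toReal_nonneg

lemma folnerDefect_one (E : Set G) : folnerDefect μ E 1 = 0 := by
  simp [folnerDefect]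

lemma folnerDefect_inv (E : Set G) (hE : MeasurableSet E) (hfin : μ E < ∞) (x : G) :
    folnerDefect μ E x⁻¹ = folnerDefect μ E x := by
  have key : μ (E \ (· * x⁻¹) ⁻¹' E) = μ (E \ (· * x) ⁻¹' E) := by
    have h1 : μ (E \ (· * x⁻¹) ⁻¹' E) = μ ((· * x) ⁻¹' E \ E) := by
      rw [← measure_preimage_mul_right μ x (E \ (· * x⁻¹) ⁻¹' E)]
      congr 1
      ext z
      simp [Set.mem_diff, mul_assoc]
    have hA : MeasurableSet ((· * x) ⁻¹' E) := (measurable_mul_const x) hE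
    have hμA : μ ((· * x) ⁻¹' E) = μ E := measure_preimage_mul_right μ x E
    have h2 : μ ((· * x) ⁻¹' E \ E) + μ ((· * x) ⁻¹' E ∩ E) = μ ((· * x) ⁻¹' E) :=
      measure_diff_add_inter _ hE
    have h3 : μ (E \ (· * x) ⁻¹' E) + μ (E ∩ (· * x) ⁻¹' E) = μ E :=
      measure_diff_add_inter _ hA
    rw [Set.inter_comm] at h2
    have hfin' : μ (E ∩ (· * x) ⁻¹' E) ≠ ∞ :=
      (lt_of_le_of_lt (measure_mono Set.inter_subset_left) hfin).ne
    rw [h1]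
    have := h2.trans (hμA.trans h3.symm)
    exact (ENNReal.add_left_inj hfin').mp this
  unfold folnerDefect
  rw [key]

lemma folnerDefect_mul_le (E : Set G) (hE : MeasurableSet E) (hfin : μ E < ∞) (x y : G) :
    folnerDefect μ E (x * y) ≤ folnerDefect μ E x + folnerDefect μ E y := by
  set A := (· * x) ⁻¹' E with hA
  set B := (· * y) ⁻¹' E with hB
  set C := (· * (x * y)) ⁻¹' E with hC
  have hCA : C = (· * x) ⁻¹' B := by
    ext z; simp [hB, hC, mul_assoc]
  have hsub : E \ C ⊆ (E \ A) ∪ (A \ C) := fun z hz => by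
    by_cases hzA : z ∈ A
    · exact Or.inr ⟨hzA, hz.2⟩
    · exact Or.inl ⟨hz.1, hzA⟩
  have hAC : μ (A \ C) = μ (E \ B) := by
    rw [hCA]
    have : A \ (· * x) ⁻¹' B = (· * x) ⁻¹' (E \ B) := rfl
    rw [this, measure_preimage_mul_right]
  have hle : μ (E \ C) ≤ μ (E \ A) + μ (E \ B) := by
    calc μ (E \ C) ≤ μ ((E \ A) ∪ (A \ C)) := measure_mono hsub
    _ ≤ μ (E \ A) + μ (A \ C) := measure_union_le _ _
    _ = μ (E \ A) + μ (E \ B) := by rw [hAC]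
  have hfinA : μ (E \ A) ≠ ∞ := (lt_of_le_of_lt (measure_mono Set.diff_subset) hfin).ne
  have hfinB : μ (E \ B) ≠ ∞ := (lt_of_le_of_lt (measure_mono Set.diff_subset) hfin).ne
  have htR : (μ (E \ C)).toReal ≤ (μ (E \ A)).toReal + (μ (E \ B)).toReal := by
    rw [← ENNReal.toReal_add hfinA hfinB]
    exact ENNReal.toReal_mono (ENNReal.add_ne_top.mpr ⟨hfinA, hfinB⟩) hle
  unfold folnerDefect
  rw [← add_div]
  gcongr

end Aux

set_option maxHeartbeats 800000

/-- If `G` is connected and `β_{E_k} → 0` almost everywhere on some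
neighborhood of the identity, then `β_{E_k}(x) → 0` for every `x ∈ G`. -/
theorem pointwiseFolner_of_ae_nhds {G : Type*} [Group G] [TopologicalSpace G]
    [IsTopologicalGroup G] [LocallyCompactSpace G] [SigmaCompactSpace G] [T2Space G]
    [ConnectedSpace G] [MeasurableSpace G] [BorelSpace G]
    (μ : Measure G) [μ.IsMulRightInvariant] [IsFiniteMeasureOnCompacts μ]
    [μ.IsOpenPosMeasure] [μ.Regular] (hμ : μ ≠ 0)
    (E : ℕ → Set G) (hE : ∀ k, MeasurableSet (E k))
    (hE0 : ∀ k, 0 < μ (E k)) (hEfin : ∀ k, μ (E k) < ∞)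
    (U : Set G) (hU : U ∈ nhds (1 : G))
    (h : ∀ᵐ x ∂μ, x ∈ U → Tendsto (fun k => folnerDefect μ (E k) x) atTop (nhds 0)) :
    ∀ x : G, Tendsto (fun k => folnerDefect μ (E k) x) atTop (nhds 0) := by
  -- The set of good points is a subgroup.
  set X : Subgroup G :=
    { carrier := {x | Tendsto (fun k => folnerDefect μ (E k) x) atTop (nhds 0)}
      one_mem' := by
        simp only [Set.mem_setOf_eq]
        have : (fun k => folnerDefect μ (E k) (1 : G)) = fun _ => (0 : ℝ) := by
          funext k; exact folnerDefect_one μ (E k)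
        rw [this]; exact tendsto_const_nhds
      mul_mem' := by
        intro x y hx hy
        simp only [Set.mem_setOf_eq] at *
        have h0 : Tendsto (fun k => folnerDefect μ (E k) x + folnerDefect μ (E k) y)
            atTop (nhds 0) := by simpa using hx.add hy
        exact squeeze_zero (fun k => folnerDefect_nonneg μ (E k) (x * y))
          (fun k => folnerDefect_mul_le μ (E k) (hE k) (hEfin k) x y) h0
      inv_mem' := by
        intro x hx
        simp only [Set.mem_setOf_eq] at *
        have : (fun k => folnerDefect μ (E k) x⁻¹) = fun k => folnerDefect μ (E k) x := by
          funext k; exact folnerDefect_inv μ (E k) (hE k) (hEfin k) x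
        rw [this]; exact hx } with hXdef
  -- A measurable subset of X with positive measure.
  obtain ⟨V, hVU, hVopen, hV1⟩ := mem_nhds_iff.mp hU
  set S := {x | x ∈ U → Tendsto (fun k => folnerDefect μ (E k) x) atTop (nhds 0)} with hSdef
  have hSc : μ Sᶜ = 0 := by
    rw [hSdef, Set.compl_setOf]
    exact ae_iff.mp h
  set T := toMeasurable μ Sᶜ with hTdef
  have hTmeas : MeasurableSet T := measurableSet_toMeasurable μ _
  have hT0 : μ T = 0 := by rw [hTdef, measure_toMeasurable]; exact hSc
  set A := V \ T with hAdef
  have hAmeas : MeasurableSet A := hVopen.measurableSet.diff hTmeas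
  have hAX : A ⊆ (X : Set G) := by
    intro z hz
    have hzS : z ∈ S := by
      by_contra hzS
      exact hz.2 (subset_toMeasurable μ Sᶜ hzS)
    exact hzS (hVU hz.1)
  have hApos : 0 < μ A := by
    rw [hAdef, measure_diff_null hT0]
    exact hVopen.measure_pos μ ⟨1, hV1⟩
  -- Steinhaus theorem applied to the inverse (left-invariant) measure.
  haveI : IsFiniteMeasureOnCompacts μ.inv := by
    constructor
    intro K hK
    rw [Measure.inv_apply]
    exact hK.inv.measure_lt_top
  haveI : μ.inv.IsOpenPosMeasure := by
    constructor
    intro W hW hWne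
    rw [Measure.inv_apply]
    exact (hW.inv.measure_ne_zero μ (by simpa using hWne))
  haveI : μ.inv.IsHaarMeasure := ⟨⟩
  have hApos' : 0 < μ.inv A⁻¹ := by rwa [Measure.inv_apply, inv_inv]
  have hsteinhaus : A⁻¹ / A⁻¹ ∈ nhds (1 : G) :=
    MeasureTheory.Measure.div_mem_nhds_one_of_haar_pos μ.inv A⁻¹ hAmeas.inv hApos'
  have hXnhds : (X : Set G) ∈ nhds (1 : G) := by
    apply Filter.mem_of_superset hsteinhaus
    rintro w ⟨a, ha, b, hb, rfl⟩
    have ha' : a⁻¹ ∈ X := hAX (Set.mem_inv.mp ha)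
    have hb' : b⁻¹ ∈ X := hAX (Set.mem_inv.mp hb)
    have : a⁻¹⁻¹ / b⁻¹⁻¹ ∈ X := div_mem (X.inv_mem ha') (X.inv_mem hb')
    simpa using this
  -- X is an open subgroup, hence clopen, hence everything by connectedness.
  have hXopen : IsOpen (X : Set G) := Subgroup.isOpen_of_mem_nhds X hXnhds
  have hXclopen : IsClopen (X : Set G) := OpenSubgroup.isClopen ⟨X, hXopen⟩
  have hXuniv : (X : Set G) = Set.univ := hXclopen.eq_univ ⟨1, X.one_mem⟩
  intro x
  have : x ∈ (X : Set G) := hXuniv ▸ Set.mem_univ x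
  exact this
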